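/- arXiv:1209.6487 — 2 statements merged into one kernel-verified Lean document; each statement's English description precedes it below -/
import Mathlib

section
/- Let τ ∈ (0,1) and suppose the real random variables X and Y (on a common probability space) have a joint density with respect to Lebesgue measure on ℝ², EX² < ∞, and E|Y| < ∞. Define h(a,b) = E[ρ_τ(Y − a − bX)] for (a,b) ∈ ℝ². Then h is continuously differentiable on ℝ², with ∂h(a,b)/∂a = P(Y − a − bX < 0) − τ and ∂h(a,b)/∂b = −E[ψ_τ(Y − a − bX)·X]. -/
open MeasureTheory ProbabilityTheory

/-- The check loss `ρ_τ(w) = w (τ - I(w<0))`. -/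
noncomputable def rho (τ w : ℝ) : ℝ := w * (τ - if w < 0 then 1 else 0)

/-- `ψ_τ(w) = τ - I(w<0)`. -/
noncomputable def psi (τ w : ℝ) : ℝ := τ - if w < 0 then 1 else 0

lemma abs_psi_le {τ : ℝ} (h0 : 0 < τ) (h1 : τ < 1) (w : ℝ) : |psi τ w| ≤ 1 := by
  unfold psi; split_ifs <;> rw [abs_le] <;> constructor <;> linarith

lemma abs_rho_le {τ : ℝ} (h0 : 0 < τ) (h1 : τ < 1) (w : ℝ) : |rho τ w| ≤ |w| := by
  unfold rho
  rw [abs_mul]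
  exact mul_le_of_le_one_right (abs_nonneg w) (abs_psi_le h0 h1 w)

lemma rho_lip {τ : ℝ} (h0 : 0 < τ) (h1 : τ < 1) (w v : ℝ) :
    |rho τ w - rho τ v| ≤ |w - v| := by
  unfold rho
  split_ifs with hw hv hv <;>
  · rw [abs_le]
    rcases abs_cases (w - v) with ⟨h, h'⟩ | ⟨h, h'⟩ <;> constructor <;> nlinarith

lemma hasDerivAt_rho (τ : ℝ) {w : ℝ} (hw : w ≠ 0) : HasDerivAt (rho τ) (psi τ w) w := by
  rcases hw.lt_or_gt with h | h
  · have hd : HasDerivAt (fun v : ℝ => v * (τ - 1)) (τ - 1) w := hasDerivAt_mul_const _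
    have heq : rho τ =ᶠ[nhds w] (fun v : ℝ => v * (τ - 1)) := by
      filter_upwards [Iio_mem_nhds h] with v hv
      simp [rho, show v < 0 from hv]
    have := hd.congr_of_eventuallyEq heq
    simpa [psi, h] using this
  · have hd : HasDerivAt (fun v : ℝ => v * (τ - 0)) (τ - 0) w := hasDerivAt_mul_const _
    have heq : rho τ =ᶠ[nhds w] (fun v : ℝ => v * (τ - 0)) := by
      filter_upwards [Ioi_mem_nhds h] with v hv
      simp [rho, not_lt.mpr (le_of_lt (show (0:ℝ) < v from hv))]
    have := hd.congr_of_eventuallyEq heq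
    simpa [psi, not_lt.mpr (le_of_lt h)] using this

lemma line_null (a b : ℝ) : (volume : Measure (ℝ × ℝ)) {p : ℝ × ℝ | p.2 - a - b * p.1 = 0} = 0 := by
  have hf : Measurable fun p : ℝ × ℝ => p.2 - a - b * p.1 := by fun_prop
  have hmeas : MeasurableSet {p : ℝ × ℝ | p.2 - a - b * p.1 = 0} :=
    hf (measurableSet_singleton 0)
  rw [show (volume : Measure (ℝ × ℝ)) = (volume : Measure ℝ).prod volume from rfl,
    Measure.prod_apply hmeas]
  have hs : ∀ x : ℝ, (Prod.mk x ⁻¹' {p : ℝ × ℝ | p.2 - a - b * p.1 = 0}) = {a + b * x} := by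
    intro x; ext y
    simp only [Set.mem_preimage, Set.mem_setOf_eq, Set.mem_singleton_iff]
    constructor <;> intro h <;> linarith
  simp [hs]

lemma measurable_psi_comp {Ω : Type*} [MeasurableSpace Ω] {f : Ω → ℝ} (hf : Measurable f)
    (τ : ℝ) : Measurable fun ω => psi τ (f ω) := by
  unfold psi
  exact measurable_const.sub
    (Measurable.ite (measurableSet_lt hf measurable_const) measurable_const measurable_const)

lemma measurable_rho_comp {Ω : Type*} [MeasurableSpace Ω] {f : Ω → ℝ} (hf : Measurable f)
    (τ : ℝ) : Measurable fun ω => rho τ (f ω) := by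
  unfold rho
  exact hf.mul (measurable_const.sub
    (Measurable.ite (measurableSet_lt hf measurable_const) measurable_const measurable_const))

lemma ae_ne_zero {Ω : Type*} [MeasurableSpace Ω] (P : Measure Ω)
    {X Y : Ω → ℝ} (hX : Measurable X) (hY : Measurable Y)
    (hjoint : Measure.map (fun ω => (X ω, Y ω)) P ≪ (volume : Measure (ℝ × ℝ)))
    (p : ℝ × ℝ) : ∀ᵐ ω ∂P, Y ω - p.1 - p.2 * X ω ≠ 0 := by
  have hs : MeasurableSet {q : ℝ × ℝ | q.2 - p.1 - p.2 * q.1 = 0} :=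
    (show Measurable fun q : ℝ × ℝ => q.2 - p.1 - p.2 * q.1 by fun_prop)
      (measurableSet_singleton 0)
  have h0 : P ((fun ω => (X ω, Y ω)) ⁻¹' {q : ℝ × ℝ | q.2 - p.1 - p.2 * q.1 = 0}) = 0 := by
    rw [← Measure.map_apply (hX.prodMk hY) hs]
    exact hjoint (line_null p.1 p.2)
  have hset : {ω | ¬ (Y ω - p.1 - p.2 * X ω ≠ 0)} =
      (fun ω => (X ω, Y ω)) ⁻¹' {q : ℝ × ℝ | q.2 - p.1 - p.2 * q.1 = 0} := by
    ext ω; simp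
  rw [ae_iff, hset]; exact h0

lemma master {Ω : Type*} [MeasurableSpace Ω] (P : Measure Ω) [IsProbabilityMeasure P]
    {τ : ℝ} (hτ0 : 0 < τ) (hτ1 : τ < 1) {X Y : Ω → ℝ} (hX : Measurable X) (hY : Measurable Y)
    (hjoint : Measure.map (fun ω => (X ω, Y ω)) P ≪ (volume : Measure (ℝ × ℝ)))
    (hXint : Integrable X P) (hY1 : Integrable Y P) (p₀ : ℝ × ℝ) :
    HasFDerivAt (fun p : ℝ × ℝ => ∫ ω, rho τ (Y ω - p.1 - p.2 * X ω) ∂P)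
      ((∫ ω, psi τ (Y ω - p₀.1 - p₀.2 * X ω) ∂P) •
          ((0 : ℝ × ℝ →L[ℝ] ℝ) - ContinuousLinearMap.fst ℝ ℝ ℝ)
        + (-∫ ω, psi τ (Y ω - p₀.1 - p₀.2 * X ω) * X ω ∂P) •
          ContinuousLinearMap.snd ℝ ℝ ℝ) p₀ := by
  have hWmeas : ∀ p : ℝ × ℝ, Measurable fun ω => Y ω - p.1 - p.2 * X ω :=
    fun p => (hY.sub measurable_const).sub (hX.const_mul p.2)
  set F' : Ω → (ℝ × ℝ →L[ℝ] ℝ) := fun ω =>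
    psi τ (Y ω - p₀.1 - p₀.2 * X ω) •
      (((0 : ℝ × ℝ →L[ℝ] ℝ) - ContinuousLinearMap.fst ℝ ℝ ℝ)
        - X ω • ContinuousLinearMap.snd ℝ ℝ ℝ) with hF'
  have hψint : Integrable (fun ω => psi τ (Y ω - p₀.1 - p₀.2 * X ω)) P :=
    (integrable_const (1 : ℝ)).mono'
      (measurable_psi_comp (hWmeas p₀) τ).aestronglyMeasurable
      (ae_of_all _ fun ω => by simpa using abs_psi_le hτ0 hτ1 _)
  have hψXint : Integrable (fun ω => psi τ (Y ω - p₀.1 - p₀.2 * X ω) * X ω) P :=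
    hXint.abs.mono'
      ((measurable_psi_comp (hWmeas p₀) τ).mul hX).aestronglyMeasurable
      (ae_of_all _ fun ω => by
        rw [Real.norm_eq_abs, abs_mul]
        exact mul_le_of_le_one_left (abs_nonneg _) (abs_psi_le hτ0 hτ1 _))
  have hint_eq : ∫ ω, F' ω ∂P =
      (∫ ω, psi τ (Y ω - p₀.1 - p₀.2 * X ω) ∂P) •
          ((0 : ℝ × ℝ →L[ℝ] ℝ) - ContinuousLinearMap.fst ℝ ℝ ℝ)
        + (-∫ ω, psi τ (Y ω - p₀.1 - p₀.2 * X ω) * X ω ∂P) •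
          ContinuousLinearMap.snd ℝ ℝ ℝ := by
    have heq : F' = fun ω =>
        psi τ (Y ω - p₀.1 - p₀.2 * X ω) •
            ((0 : ℝ × ℝ →L[ℝ] ℝ) - ContinuousLinearMap.fst ℝ ℝ ℝ)
          + (-(psi τ (Y ω - p₀.1 - p₀.2 * X ω) * X ω)) •
            ContinuousLinearMap.snd ℝ ℝ ℝ := by
      funext ω
      rw [hF']
      module
    have hn : Integrable (fun ω => -(psi τ (Y ω - p₀.1 - p₀.2 * X ω) * X ω)) P := hψXint.neg
    simp only [heq]
    rw [integral_add (hψint.smul_const _) (hn.smul_const _),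
      integral_smul_const, integral_smul_const, integral_neg]
  rw [← hint_eq]
  refine (hasFDerivAt_integral_of_dominated_loc_of_lip'
    (F := fun p ω => rho τ (Y ω - p.1 - p.2 * X ω)) (F' := F')
    (bound := fun ω => 1 + |X ω|) (Metric.ball_mem_nhds p₀ one_pos) ?_ ?_ ?_ ?_ ?_ ?_).2
  · intro p _
    exact (measurable_rho_comp (hWmeas p) τ).aestronglyMeasurable
  · have hWint : Integrable (fun ω => Y ω - p₀.1 - p₀.2 * X ω) P :=
      (hY1.sub (integrable_const p₀.1)).sub (hXint.const_mul p₀.2)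
    exact hWint.abs.mono' (measurable_rho_comp (hWmeas p₀) τ).aestronglyMeasurable
      (ae_of_all _ fun ω => by rw [Real.norm_eq_abs]; exact abs_rho_le hτ0 hτ1 _)
  · have hΦ : Continuous fun cx : ℝ × ℝ =>
        cx.1 • (((0 : ℝ × ℝ →L[ℝ] ℝ) - ContinuousLinearMap.fst ℝ ℝ ℝ)
          - cx.2 • ContinuousLinearMap.snd ℝ ℝ ℝ) :=
      continuous_fst.smul (continuous_const.sub (continuous_snd.smul continuous_const))
    exact hΦ.comp_aestronglyMeasurable
      ((measurable_psi_comp (hWmeas p₀) τ).aestronglyMeasurable.prodMk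
        hX.aestronglyMeasurable)
  · refine ae_of_all _ fun ω p _ => ?_
    rw [Real.norm_eq_abs]
    refine (rho_lip hτ0 hτ1 _ _).trans ?_
    have he : Y ω - p.1 - p.2 * X ω - (Y ω - p₀.1 - p₀.2 * X ω)
        = -((p - p₀).1) + -((p - p₀).2 * X ω) := by
      simp only [Prod.fst_sub, Prod.snd_sub]; ring
    rw [he]
    calc |(-((p - p₀).1) + -((p - p₀).2 * X ω))|
        ≤ |(p - p₀).1| + |(p - p₀).2| * |X ω| := by
          refine (abs_add_le _ _).trans ?_
          rw [abs_neg, abs_neg, abs_mul]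
      _ ≤ ‖p - p₀‖ + ‖p - p₀‖ * |X ω| := by
          refine add_le_add ?_ (mul_le_mul_of_nonneg_right ?_ (abs_nonneg _))
          · exact norm_fst_le (p - p₀)
          · exact norm_snd_le (p - p₀)
      _ = (1 + |X ω|) * ‖p - p₀‖ := by ring
  · exact (integrable_const 1).add hXint.abs
  · filter_upwards [ae_ne_zero P hX hY hjoint p₀] with ω hω
    have hg : HasFDerivAt (fun p : ℝ × ℝ => Y ω - p.1 - p.2 * X ω)
        (((0 : ℝ × ℝ →L[ℝ] ℝ) - ContinuousLinearMap.fst ℝ ℝ ℝ)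
          - X ω • ContinuousLinearMap.snd ℝ ℝ ℝ) p₀ :=
      ((hasFDerivAt_const (Y ω) p₀).sub (hasFDerivAt_fst)).sub
        ((hasFDerivAt_snd).mul_const (X ω))
    exact (hasDerivAt_rho τ hω).comp_hasFDerivAt p₀ hg

lemma cont_psi_integral {Ω : Type*} [MeasurableSpace Ω] (P : Measure Ω)
    {τ : ℝ} (hτ0 : 0 < τ) (hτ1 : τ < 1) {X Y g : Ω → ℝ}
    (hX : Measurable X) (hY : Measurable Y) (hg : Measurable g) (hgint : Integrable g P)
    (hjoint : Measure.map (fun ω => (X ω, Y ω)) P ≪ (volume : Measure (ℝ × ℝ))) :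
    Continuous fun p : ℝ × ℝ => ∫ ω, psi τ (Y ω - p.1 - p.2 * X ω) * g ω ∂P := by
  rw [continuous_iff_continuousAt]
  intro p₀
  refine continuousAt_of_dominated ?_ ?_ hgint.abs ?_
  · exact Filter.Eventually.of_forall fun p =>
      ((measurable_psi_comp ((hY.sub measurable_const).sub (hX.const_mul p.2)) τ).mul
        hg).aestronglyMeasurable
  · refine Filter.Eventually.of_forall fun p => ae_of_all _ fun ω => ?_
    rw [Real.norm_eq_abs, abs_mul]
    exact mul_le_of_le_one_left (abs_nonneg _) (abs_psi_le hτ0 hτ1 _)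
  · filter_upwards [ae_ne_zero P hX hY hjoint p₀] with ω hω
    have hWc : Continuous fun p : ℝ × ℝ => Y ω - p.1 - p.2 * X ω := by fun_prop
    have hc : ContinuousAt (fun p : ℝ × ℝ => psi τ (Y ω - p.1 - p.2 * X ω)) p₀ := by
      rcases hω.lt_or_gt with h | h
      · have hev : ∀ᶠ p in nhds p₀, psi τ (Y ω - p.1 - p.2 * X ω) = τ - 1 := by
          filter_upwards [(isOpen_lt hWc continuous_const).mem_nhds h] with p hp
          simp [psi, show Y ω - p.1 - p.2 * X ω < 0 from hp]
        exact Filter.EventuallyEq.continuousAt hev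
      · have hev : ∀ᶠ p in nhds p₀, psi τ (Y ω - p.1 - p.2 * X ω) = τ := by
          filter_upwards [(isOpen_lt continuous_const hWc).mem_nhds h] with p hp
          simp [psi, not_lt.mpr (le_of_lt (show (0:ℝ) < Y ω - p.1 - p.2 * X ω from hp))]
        exact Filter.EventuallyEq.continuousAt hev
    exact hc.mul continuousAt_const

/-- If `(X, Y)` has a joint density with respect to Lebesgue measure on `ℝ²`,
`EX² < ∞` and `E|Y| < ∞`, then `h(a,b) = E[ρ_τ(Y − a − bX)]` is continuously
differentiable with `∂h/∂a = P(Y − a − bX < 0) − τ` and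
`∂h/∂b = −E[ψ_τ(Y − a − bX) X]`. -/
theorem stmt2 {Ω : Type*} [MeasurableSpace Ω] (P : Measure Ω) [IsProbabilityMeasure P]
    (τ : ℝ) (hτ : τ ∈ Set.Ioo (0 : ℝ) 1)
    (X Y : Ω → ℝ) (hX : Measurable X) (hY : Measurable Y)
    (hjoint : Measure.map (fun ω => (X ω, Y ω)) P ≪ (volume : Measure (ℝ × ℝ)))
    (hX2 : Integrable (fun ω => (X ω) ^ 2) P) (hY1 : Integrable Y P) :
    ContDiff ℝ 1 (fun p : ℝ × ℝ => ∫ ω, rho τ (Y ω - p.1 - p.2 * X ω) ∂P) ∧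
    (∀ a b : ℝ, HasDerivAt (fun a' : ℝ => ∫ ω, rho τ (Y ω - a' - b * X ω) ∂P)
      ((P {ω | Y ω - a - b * X ω < 0}).toReal - τ) a) ∧
    (∀ a b : ℝ, HasDerivAt (fun b' : ℝ => ∫ ω, rho τ (Y ω - a - b' * X ω) ∂P)
      (-∫ ω, psi τ (Y ω - a - b * X ω) * X ω ∂P) b) := by
  obtain ⟨hτ0, hτ1⟩ := hτ
  have hXint : Integrable X P := by
    have hb : Integrable (fun ω => X ω ^ 2 + 1) P := hX2.add (integrable_const 1)
    refine hb.mono' hX.aestronglyMeasurable (ae_of_all _ fun ω => ?_)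
    rw [Real.norm_eq_abs]
    nlinarith [abs_nonneg (X ω), sq_abs (X ω), sq_nonneg (|X ω| - 1)]
  have key := master P hτ0 hτ1 hX hY hjoint hXint hY1
  have h1 : Continuous fun p : ℝ × ℝ => ∫ ω, psi τ (Y ω - p.1 - p.2 * X ω) ∂P := by
    have := cont_psi_integral P hτ0 hτ1 hX hY measurable_const (integrable_const (1:ℝ)) hjoint
    simpa using this
  have h2 : Continuous fun p : ℝ × ℝ => ∫ ω, psi τ (Y ω - p.1 - p.2 * X ω) * X ω ∂P :=
    cont_psi_integral P hτ0 hτ1 hX hY hX hXint hjoint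
  -- the ψ-integral in terms of the measure of the negativity set
  have hintpsi : ∀ a b : ℝ, ∫ ω, psi τ (Y ω - a - b * X ω) ∂P
      = τ - (P {ω | Y ω - a - b * X ω < 0}).toReal := by
    intro a b
    have hms : MeasurableSet {ω | Y ω - a - b * X ω < 0} :=
      measurableSet_lt ((hY.sub measurable_const).sub (hX.const_mul b)) measurable_const
    have hindint : Integrable (fun ω => if Y ω - a - b * X ω < 0 then (1:ℝ) else 0) P :=
      (integrable_const (1:ℝ)).mono'
        ((Measurable.ite hms measurable_const measurable_const).aestronglyMeasurable)
        (ae_of_all _ fun ω => by split_ifs <;> simp)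
    have hind : ∫ ω, (if Y ω - a - b * X ω < 0 then (1:ℝ) else 0) ∂P
        = (P {ω | Y ω - a - b * X ω < 0}).toReal := by
      have hfe : (fun ω => if Y ω - a - b * X ω < 0 then (1:ℝ) else 0)
          = Set.indicator {ω | Y ω - a - b * X ω < 0} 1 := by
        funext ω; simp [Set.indicator_apply]
      rw [hfe, integral_indicator_one hms]
      rfl
    unfold psi
    rw [integral_sub (integrable_const τ) hindint, hind, integral_const]
    simp
  refine ⟨?_, ?_, ?_⟩
  · rw [contDiff_one_iff_fderiv]
    refine ⟨fun p => (key p).differentiableAt, ?_⟩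
    have hfd : (fderiv ℝ (fun p : ℝ × ℝ => ∫ ω, rho τ (Y ω - p.1 - p.2 * X ω) ∂P))
        = fun p : ℝ × ℝ => (∫ ω, psi τ (Y ω - p.1 - p.2 * X ω) ∂P) •
          ((0 : ℝ × ℝ →L[ℝ] ℝ) - ContinuousLinearMap.fst ℝ ℝ ℝ)
        + (-∫ ω, psi τ (Y ω - p.1 - p.2 * X ω) * X ω ∂P) •
          ContinuousLinearMap.snd ℝ ℝ ℝ := funext fun p => (key p).fderiv
    rw [hfd]
    exact (h1.smul continuous_const).add (h2.neg.smul continuous_const)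
  · intro a b
    have hcurve : HasDerivAt (fun a' : ℝ => ((a', b) : ℝ × ℝ)) ((1 : ℝ), (0 : ℝ)) a :=
      (hasDerivAt_id a).prodMk (hasDerivAt_const a b)
    have hcomp := (key (a, b)).comp_hasDerivAt_of_eq _ hcurve rfl
    simp only [ContinuousLinearMap.add_apply, ContinuousLinearMap.smul_apply,
      ContinuousLinearMap.sub_apply, ContinuousLinearMap.zero_apply,
      ContinuousLinearMap.coe_fst', ContinuousLinearMap.coe_snd', smul_eq_mul] at hcomp
    refine hcomp.congr_deriv ?_
    rw [hintpsi a b]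
    ring
  · intro a b
    have hcurve : HasDerivAt (fun b' : ℝ => ((a, b') : ℝ × ℝ)) ((0 : ℝ), (1 : ℝ)) b :=
      (hasDerivAt_const b a).prodMk (hasDerivAt_id b)
    have hcomp := (key (a, b)).comp_hasDerivAt_of_eq _ hcurve rfl
    simp only [ContinuousLinearMap.add_apply, ContinuousLinearMap.smul_apply,
      ContinuousLinearMap.sub_apply, ContinuousLinearMap.zero_apply,
      ContinuousLinearMap.coe_fst', ContinuousLinearMap.coe_snd', smul_eq_mul] at hcomp
    refine hcomp.congr_deriv ?_
    ring
end

section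
/- Let τ ∈ (0,1) and let (X,Y) be a bivariate normal random vector with mean zero, var(X) = var(Y) = 1, and cov(X,Y) = 1/2. Then the quantile correlation equals qcor_τ{Y,X} = 0.5·exp{−0.5·[Φ⁻¹(τ)]²} / √((τ−τ²)·2π), where Φ is the standard normal cumulative distribution function. -/
open MeasureTheory ProbabilityTheory

/-- The `τ`-th quantile of a real random variable `Y` under `P`. -/
noncomputable def quant {Ω : Type*} [MeasurableSpace Ω] (P : Measure Ω) (Y : Ω → ℝ)
    (τ : ℝ) : ℝ := sInf {y : ℝ | τ ≤ (P {ω | Y ω ≤ y}).toReal}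

/-- The quantile covariance `qcov_τ{Y,X} = E[ψ_τ(Y − Q_{τ,Y})(X − EX)]`. -/
noncomputable def qcov {Ω : Type*} [MeasurableSpace Ω] (P : Measure Ω) (Y X : Ω → ℝ)
    (τ : ℝ) : ℝ := ∫ ω, psi τ (Y ω - quant P Y τ) * (X ω - ∫ ω', X ω' ∂P) ∂P

/-- The quantile correlation `qcor_τ{Y,X} = qcov_τ{Y,X} / √((τ−τ²) var X)`. -/
noncomputable def qcor {Ω : Type*} [MeasurableSpace Ω] (P : Measure Ω) (Y X : Ω → ℝ)
    (τ : ℝ) : ℝ := qcov P Y X τ / Real.sqrt ((τ - τ ^ 2) * variance X P)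

/-- The standard normal cumulative distribution function `Φ`. -/
noncomputable def stdNormalCDF (x : ℝ) : ℝ := ((gaussianReal 0 1) (Set.Iic x)).toReal

/-- The standard normal quantile function `Φ⁻¹`. -/
noncomputable def stdNormalQuantile (τ : ℝ) : ℝ := sInf {x : ℝ | τ ≤ stdNormalCDF x}

section Aux
open Real Filter Set
open scoped NNReal ENNReal

noncomputable def E' (x : ℝ) : ℝ := Real.exp (-x^2/2)

lemma E'_def : E' = fun x => Real.exp (-(1/2 : ℝ) * x^2) := by
  funext x; unfold E'; ring_nf

lemma E'_pos (x : ℝ) : 0 < E' x := Real.exp_pos _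

lemma E'_nonneg (x : ℝ) : 0 ≤ E' x := (E'_pos x).le

lemma measurable_E' : Measurable E' :=
  ((measurable_id.pow_const 2).neg.div_const 2).exp

lemma integrable_E' : Integrable E' := by
  rw [E'_def]; exact integrable_exp_neg_mul_sq (by norm_num)

lemma integral_E' : ∫ x, E' x = Real.sqrt (2*Real.pi) := by
  rw [E'_def, integral_gaussian, show (π / (1/2 : ℝ)) = 2*π by ring]

lemma integrable_mul_E' : Integrable (fun x => x * E' x) := by
  rw [E'_def]; exact integrable_mul_exp_neg_mul_sq (by norm_num)

lemma hasDerivAt_negE' (x : ℝ) : HasDerivAt (fun y => -E' y) (x * E' x) x := by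
  have h : HasDerivAt (fun y : ℝ => -y^2/2) (-x) x := by
    have := ((hasDerivAt_pow 2 x).neg).div_const 2
    refine this.congr_deriv ?_
    norm_num; ring
  have h2 := (h.exp).neg
  refine h2.congr_deriv ?_
  unfold E'; ring

lemma tendsto_sq_atBot : Tendsto (fun x : ℝ => x^2) atBot atTop := by
  have := (tendsto_pow_atTop (n := 2) (two_ne_zero)).comp
    (tendsto_abs_atBot_atTop (G := ℝ))
  simpa [Function.comp_def, sq_abs] using this

lemma tendsto_E'_atBot : Tendsto E' atBot (nhds 0) := by
  apply Real.tendsto_exp_atBot.comp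
  apply Tendsto.atBot_div_const (by norm_num : (0:ℝ) < 2)
  exact tendsto_neg_atTop_atBot.comp tendsto_sq_atBot

lemma tendsto_E'_atTop : Tendsto E' atTop (nhds 0) := by
  apply Real.tendsto_exp_atBot.comp
  apply Tendsto.atBot_div_const (by norm_num : (0:ℝ) < 2)
  exact tendsto_neg_atTop_atBot.comp (tendsto_pow_atTop two_ne_zero)

lemma tendsto_negE'_atBot : Tendsto (fun y => -E' y) atBot (nhds 0) := by
  simpa using tendsto_E'_atBot.neg

/-- key integral: ∫_{Iic t} x E'(x) dx = -E' t -/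
lemma integral_Iic_mul_E' (t : ℝ) : ∫ x in Iic t, x * E' x = - E' t := by
  have := integral_Iic_of_hasDerivAt_of_tendsto' (a := t) (m := 0)
    (f := fun y => -E' y) (f' := fun x => x * E' x)
    (fun x _ => hasDerivAt_negE' x) (integrable_mul_E'.integrableOn)
    tendsto_negE'_atBot
  simpa using this

lemma integral_mul_E' : ∫ x, x * E' x = 0 := by
  have := integral_of_hasDerivAt_of_tendsto (f := fun y => -E' y)
    (f' := fun x => x * E' x) (m := 0) (n := 0)
    (fun x => hasDerivAt_negE' x) integrable_mul_E'
    tendsto_negE'_atBot (by simpa using tendsto_E'_atTop.neg)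
  simpa using this

lemma integrable_sq_mul_E' : Integrable (fun x => x^2 * E' x) := by
  apply Integrable.mono' ((integrable_exp_neg_mul_sq (b := 1/4) (by norm_num)).const_mul 4)
  · exact ((measurable_id.pow_const 2).mul measurable_E').aestronglyMeasurable
  · refine ae_of_all _ fun x => ?_
    have h1 : ‖x^2 * E' x‖ = x^2 * E' x := by
      rw [Real.norm_eq_abs, abs_of_nonneg]
      exact mul_nonneg (sq_nonneg x) (E'_nonneg x)
    rw [h1]
    unfold E'
    have h2 : x^2 ≤ 4 * Real.exp (x^2/4) := by
      have := Real.add_one_le_exp (x^2/4)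
      nlinarith [Real.exp_pos (x^2/4)]
    calc x^2 * Real.exp (-x^2/2) ≤ (4 * Real.exp (x^2/4)) * Real.exp (-x^2/2) := by
          apply mul_le_mul_of_nonneg_right h2 (Real.exp_pos _).le
      _ = 4 * Real.exp (-(1/4:ℝ) * x^2) := by
          rw [mul_assoc, ← Real.exp_add]; ring_nf

lemma tendsto_mul_E'_atTop : Tendsto (fun x => x * E' x) atTop (nhds 0) := by
  have h := rpow_mul_exp_neg_mul_sq_isLittleO_exp_neg (b := 1/2) (by norm_num) 1
  have h2 : Tendsto (fun x : ℝ => Real.exp (-(1/2 : ℝ) * x)) atTop (nhds 0) := by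
    have ht : Tendsto (fun x : ℝ => (1/2 : ℝ) * x) atTop atTop :=
      tendsto_id.const_mul_atTop (by norm_num)
    have := Real.tendsto_exp_neg_atTop_nhds_zero.comp ht
    apply this.congr; intro x; simp only [Function.comp]; ring_nf
  have h3 := h.trans_tendsto h2
  apply h3.congr'
  filter_upwards [eventually_gt_atTop (0:ℝ)] with x hx
  rw [E'_def, Real.rpow_one]

lemma tendsto_mul_E'_atBot : Tendsto (fun x => x * E' x) atBot (nhds 0) := by
  have h := (tendsto_mul_E'_atTop.comp (tendsto_neg_atBot_atTop : Tendsto (fun x : ℝ => -x) atBot atTop)).neg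
  have h2 : Tendsto (fun x : ℝ => x * E' x) atBot (nhds (-0)) := by
    apply h.congr
    intro x
    simp only [Function.comp_apply]
    unfold E'; ring_nf
  simpa using h2

lemma integral_sq_mul_E' : ∫ x, x^2 * E' x = Real.sqrt (2*Real.pi) := by
  have hderiv : ∀ x : ℝ, HasDerivAt (fun y => -(y * E' y)) (x^2 * E' x - E' x) x := by
    intro x
    have h1 : HasDerivAt (fun y : ℝ => y) 1 x := hasDerivAt_id x
    have h2 : HasDerivAt E' (-(x * E' x)) x := by
      have := (hasDerivAt_negE' x).neg
      simpa [Pi.neg_def] using this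
    have := (h1.mul h2).neg
    refine this.congr_deriv ?_
    ring
  have hint : Integrable (fun x => x^2 * E' x - E' x) := integrable_sq_mul_E'.sub integrable_E'
  have h0 := integral_of_hasDerivAt_of_tendsto (m := 0) (n := 0) hderiv hint
    (by simpa using tendsto_mul_E'_atBot.neg) (by simpa using tendsto_mul_E'_atTop.neg)
  have := integral_sub integrable_sq_mul_E' integrable_E'
  rw [h0] at this
  have h4 : ∫ x, x^2 * E' x = ∫ x, E' x := by linarith [this, integral_E']
  rw [h4, integral_E']


lemma sqrt2pi_pos : 0 < Real.sqrt (2*Real.pi) := Real.sqrt_pos.mpr (by positivity)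

lemma pdf_eq (x : ℝ) : gaussianPDFReal 0 1 x = (Real.sqrt (2*Real.pi))⁻¹ * E' x := by
  simp [gaussianPDFReal, E']

lemma gaussPDF_meas : Measurable fun x => (gaussianPDFReal 0 1 x).toNNReal :=
  (measurable_gaussianPDFReal 0 1).real_toNNReal

lemma gaussDensity : gaussianReal 0 1
    = (volume : Measure ℝ).withDensity (fun x => ((gaussianPDFReal 0 1 x).toNNReal : ℝ≥0∞)) := by
  rw [gaussianReal_of_var_ne_zero 0 one_ne_zero]
  rfl

lemma integral_gaussReal (g : ℝ → ℝ) :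
    ∫ x, g x ∂(gaussianReal 0 1) = (Real.sqrt (2*Real.pi))⁻¹ * ∫ x, E' x * g x := by
  rw [gaussDensity, integral_withDensity_eq_integral_smul gaussPDF_meas, ← integral_const_mul]
  congr 1 with x
  rw [NNReal.smul_def, smul_eq_mul, Real.coe_toNNReal _ (gaussianPDFReal_nonneg 0 1 x), pdf_eq]
  ring

lemma integrable_gaussReal_iff (g : ℝ → ℝ) :
    Integrable g (gaussianReal 0 1) ↔ Integrable (fun x => E' x * g x) := by
  rw [gaussDensity, integrable_withDensity_iff_integrable_smul gaussPDF_meas]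
  have heq : (fun x => (gaussianPDFReal 0 1 x).toNNReal • g x)
      = fun x => (Real.sqrt (2*Real.pi))⁻¹ * (E' x * g x) := by
    funext x
    rw [NNReal.smul_def, smul_eq_mul, Real.coe_toNNReal _ (gaussianPDFReal_nonneg 0 1 x), pdf_eq]
    ring
  rw [heq, integrable_const_mul_iff (isUnit_iff_ne_zero.mpr (inv_ne_zero sqrt2pi_pos.ne'))]

lemma integral_id_gauss : ∫ x, x ∂(gaussianReal 0 1) = 0 := by
  rw [integral_gaussReal]
  simp only [mul_comm (E' _)]
  rw [integral_mul_E', mul_zero]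

lemma integrable_id_gauss : Integrable (fun x => x) (gaussianReal 0 1) := by
  rw [integrable_gaussReal_iff]
  simp only [mul_comm (E' _)]
  exact integrable_mul_E'

lemma integral_sq_gauss : ∫ x, x^2 ∂(gaussianReal 0 1) = 1 := by
  rw [integral_gaussReal]
  simp only [mul_comm (E' _)]
  rw [integral_sq_mul_E', inv_mul_cancel₀ sqrt2pi_pos.ne']

lemma integrable_sq_gauss : Integrable (fun x => x^2) (gaussianReal 0 1) := by
  rw [integrable_gaussReal_iff]
  simp only [mul_comm (E' _)]
  exact integrable_sq_mul_E'


lemma stdNormalCDF_eq (y : ℝ) :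
    stdNormalCDF y = (Real.sqrt (2*Real.pi))⁻¹ * ∫ x, E' x * (Iic y).indicator 1 x := by
  rw [stdNormalCDF, ← measureReal_def, ← integral_indicator_one measurableSet_Iic, integral_gaussReal]


lemma K2 (q : ℝ) :
    (∫ v, ∫ u, (if u/2 + (Real.sqrt 3/2)*v < q then (1:ℝ) else 0) * u
        ∂(gaussianReal 0 1) ∂(gaussianReal 0 1))
      = - (E' q / (2 * Real.sqrt (2*Real.pi))) := by
  have hs3 : Real.sqrt 3 ^ 2 = 3 := Real.sq_sqrt (by norm_num)
  have hinner : ∀ v : ℝ, (∫ u, (if u/2 + (Real.sqrt 3/2)*v < q then (1:ℝ) else 0) * u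
      ∂(gaussianReal 0 1)) = (Real.sqrt (2*Real.pi))⁻¹ * (- E' (2*q - Real.sqrt 3 * v)) := by
    intro v
    rw [integral_gaussReal]
    congr 1
    have hpt : ∀ u : ℝ, E' u * ((if u/2 + (Real.sqrt 3/2)*v < q then (1:ℝ) else 0) * u)
        = (Iio (2*q - Real.sqrt 3 * v)).indicator (fun x => x * E' x) u := by
      intro u
      by_cases h : u/2 + (Real.sqrt 3/2)*v < q
      · rw [if_pos h, indicator_of_mem (by simp only [mem_Iio]; linarith)]; ring
      · rw [if_neg h, indicator_of_notMem (by simp only [mem_Iio, not_lt]; linarith)]; ring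
    rw [integral_congr_ae (ae_of_all _ hpt), integral_indicator measurableSet_Iio,
      Measure.restrict_congr_set Iio_ae_eq_Iic, integral_Iic_mul_E']
  simp only [hinner]
  rw [integral_const_mul, integral_gaussReal]
  have hpt2 : ∀ v : ℝ, E' v * (- E' (2*q - Real.sqrt 3*v)) = -(E' q * E' (2*v - Real.sqrt 3*q)) := by
    intro v
    have key : E' v * E' (2*q - Real.sqrt 3*v) = E' q * E' (2*v - Real.sqrt 3*q) := by
      unfold E'
      rw [← Real.exp_add, ← Real.exp_add]
      congr 1
      linear_combination ((q^2 - v^2)/2) * hs3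
    rw [mul_neg, key]
  rw [integral_congr_ae (ae_of_all _ hpt2), integral_neg, integral_const_mul]
  have hcv : (∫ v : ℝ, E' (2*v - Real.sqrt 3*q)) = (1/2) * Real.sqrt (2*Real.pi) := by
    have h : (∫ v : ℝ, E' (2*v - Real.sqrt 3*q))
        = |(2:ℝ)⁻¹| • ∫ x : ℝ, E' (x - Real.sqrt 3*q) :=
      Measure.integral_comp_mul_left (fun x => E' (x - Real.sqrt 3*q)) 2
    rw [h, integral_sub_right_eq_self E' (Real.sqrt 3*q), integral_E', smul_eq_mul]
    norm_num
  rw [hcv]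
  have h0 := sqrt2pi_pos.ne'
  field_simp

lemma K1 (y : ℝ) :
    (∫ u, ∫ v, (Iic y).indicator (1 : ℝ → ℝ) (u/2 + (Real.sqrt 3/2)*v)
        ∂(gaussianReal 0 1) ∂(gaussianReal 0 1)) = stdNormalCDF y := by
  have hs3 : Real.sqrt 3 ^ 2 = 3 := Real.sq_sqrt (by norm_num)
  have hsp : 0 < Real.sqrt 3 := Real.sqrt_pos.mpr (by norm_num)
  set s : ℝ := Real.sqrt 3 with hs
  have hsne : s ≠ 0 := hsp.ne'
  set I1 : ℝ → ℝ := (Iic y).indicator 1 with hI1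
  have hI1m : Measurable I1 := measurable_const.indicator measurableSet_Iic
  have hEdiv : ∀ x : ℝ, E' (x/(s/2)) = Real.exp (-(2/3)*x^2) := by
    intro x
    unfold E'
    congr 1
    have h34 : (s/2)^2 = 3/4 := by rw [div_pow, hs3]; norm_num
    rw [div_pow, h34]
    ring
  -- the two-variable integrand after rewriting
  set G : ℝ → ℝ → ℝ := fun u w => E' w * I1 w * Real.exp (-(2/3)*(u - w/2)^2) with hG
  have hGpt : ∀ u w : ℝ, E' u * (E' ((w - u/2)/(s/2)) * I1 w) = G u w := by
    intro u w
    rw [hEdiv (w - u/2)]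
    simp only [G]
    have key : E' u * Real.exp (-(2/3)*(w - u/2)^2) = E' w * Real.exp (-(2/3)*(u - w/2)^2) := by
      unfold E'
      rw [← Real.exp_add, ← Real.exp_add]
      congr 1
      ring
    calc E' u * (Real.exp (-(2/3)*(w - u/2)^2) * I1 w)
        = (E' u * Real.exp (-(2/3)*(w - u/2)^2)) * I1 w := by ring
      _ = (E' w * Real.exp (-(2/3)*(u - w/2)^2)) * I1 w := by rw [key]
      _ = E' w * I1 w * Real.exp (-(2/3)*(u - w/2)^2) := by ring
  -- gaussian constant
  have hC : (∫ u : ℝ, Real.exp (-(2/3)*u^2)) = (s/2) * Real.sqrt (2*Real.pi) := by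
    rw [integral_gaussian]
    rw [show Real.pi/(2/3) = (s/2)^2 * (2*Real.pi) by rw [div_pow, hs3]; ring,
      Real.sqrt_mul (by positivity), Real.sqrt_sq (by positivity)]
  have hCw : ∀ w : ℝ, (∫ u : ℝ, Real.exp (-(2/3)*(u - w/2)^2)) = (s/2) * Real.sqrt (2*Real.pi) := by
    intro w
    rw [integral_sub_right_eq_self (fun u => Real.exp (-(2/3)*u^2)) (w/2)] at *
    exact hC
  -- integrability of uncurried G
  have hGmeas : AEStronglyMeasurable (Function.uncurry G) ((volume : Measure ℝ).prod volume) := by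
    apply Measurable.aestronglyMeasurable
    show Measurable fun p : ℝ × ℝ => E' p.2 * I1 p.2 * Real.exp (-(2/3)*(p.1 - p.2/2)^2)
    exact ((measurable_E'.comp measurable_snd).mul (hI1m.comp measurable_snd)).mul
      ((((measurable_fst.sub (measurable_snd.div_const 2)).pow_const 2).const_mul (-(2/3))).exp)
  have hEI : (fun w => E' w * I1 w) = (Iic y).indicator E' := by
    funext w
    by_cases h : w ∈ Iic y
    · rw [indicator_of_mem h]
      simp only [I1, indicator_of_mem h, Pi.one_apply, mul_one]
    · rw [indicator_of_notMem h]
      simp only [I1, indicator_of_notMem h, mul_zero]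
  have hEIint : Integrable (fun w => E' w * I1 w) := by
    rw [hEI]; exact integrable_E'.indicator measurableSet_Iic
  have hGint : Integrable (Function.uncurry G) ((volume : Measure ℝ).prod volume) := by
    rw [integrable_prod_iff' hGmeas]
    constructor
    · refine ae_of_all _ fun w => ?_
      have hbase : Integrable (fun u : ℝ => Real.exp (-(2/3)*(u - w/2)^2)) volume :=
        (integrable_exp_neg_mul_sq (by norm_num : (0:ℝ) < 2/3)).comp_sub_right (w/2)
      simpa [Function.uncurry, G] using hbase.const_mul (E' w * I1 w)
    · have hpt : ∀ w : ℝ, (∫ u, ‖Function.uncurry G (u, w)‖)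
          = E' w * I1 w * ((s/2) * Real.sqrt (2*Real.pi)) := by
        intro w
        have hnn : ∀ u : ℝ, ‖Function.uncurry G (u, w)‖ = G u w := by
          intro u
          apply Real.norm_of_nonneg
          show (0:ℝ) ≤ E' w * I1 w * Real.exp (-(2/3)*(u - w/2)^2)
          exact mul_nonneg (mul_nonneg (E'_nonneg w)
            (indicator_nonneg (fun _ _ => zero_le_one) w)) (Real.exp_nonneg _)
        simp only [hnn, G]
        rw [integral_const_mul, hCw w]
      rw [funext hpt]
      exact (hEIint.mul_const _)
  -- now the main computation
  have hinner : ∀ u : ℝ, (∫ v, I1 (u/2 + (s/2)*v) ∂(gaussianReal 0 1))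
      = (Real.sqrt (2*Real.pi))⁻¹ * ((2/s) * ∫ w, E' ((w - u/2)/(s/2)) * I1 w) := by
    intro u
    rw [integral_gaussReal]
    congr 1
    set g : ℝ → ℝ := fun w => E' ((w - u/2)/(s/2)) * I1 w with hg
    have hpt : ∀ v : ℝ, E' v * I1 (u/2 + (s/2)*v) = (fun x => g (x + u/2)) ((s/2) * v) := by
      intro v
      simp only [g]
      have h1 : ((s/2)*v + u/2 - u/2)/(s/2) = v := by field_simp; ring
      rw [h1]
      ring_nf
    rw [integral_congr_ae (ae_of_all _ hpt),
      Measure.integral_comp_mul_left (fun x => g (x + u/2)) (s/2),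
      integral_add_right_eq_self g (u/2)]
    have habs : |(s/2)⁻¹| = 2/s := by
      rw [abs_of_pos (by positivity)]
      field_simp
    rw [habs, smul_eq_mul]
  simp only [hinner]
  rw [integral_const_mul, integral_gaussReal, ← mul_assoc]
  have hswap : (∫ u, E' u * ((2/s) * ∫ w, E' ((w - u/2)/(s/2)) * I1 w))
      = (2/s) * (((s/2) * Real.sqrt (2*Real.pi)) * ∫ w, E' w * I1 w) := by
    have h1 : ∀ u : ℝ, E' u * ((2/s) * ∫ w, E' ((w - u/2)/(s/2)) * I1 w)
        = (2/s) * ∫ w, G u w := by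
      intro u
      calc E' u * ((2/s) * ∫ w, E' ((w - u/2)/(s/2)) * I1 w)
          = (2/s) * ∫ w, E' u * (E' ((w - u/2)/(s/2)) * I1 w) := by
            rw [integral_const_mul (E' u) fun w => E' ((w - u/2)/(s/2)) * I1 w]
            ring
        _ = (2/s) * ∫ w, G u w := by
            congr 1
            exact integral_congr_ae (ae_of_all _ fun w => hGpt u w)
    rw [funext h1, integral_const_mul]
    congr 1
    rw [integral_integral_swap hGint]
    have h2 : ∀ w : ℝ, (∫ u, G u w) = (E' w * I1 w) * ((s/2) * Real.sqrt (2*Real.pi)) := by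
      intro w
      simp only [G]
      rw [integral_const_mul, hCw w]
    rw [funext h2, integral_mul_const]
    ring
  rw [hswap, stdNormalCDF_eq]
  have h0 := sqrt2pi_pos.ne'
  field_simp
  ring

end Aux

section Main
open Real Filter Set
open scoped NNReal ENNReal

/-- For `(X,Y)` a centered bivariate normal vector with unit variances and covariance
`1/2` (encoded via its Gaussian representation `X = U`, `Y = U/2 + (√3/2) V` with
`U, V` independent standard normals),
`qcor_τ{Y,X} = 0.5 exp(−0.5 (Φ⁻¹(τ))²) / √((τ−τ²) 2π)`. -/
theorem stmt18 {Ω : Type*} [MeasurableSpace Ω] (P : Measure Ω) [IsProbabilityMeasure P]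
    (τ : ℝ) (hτ : τ ∈ Set.Ioo (0 : ℝ) 1)
    (X Y : Ω → ℝ) (hX : Measurable X) (hY : Measurable Y)
    (hlaw : Measure.map (fun ω => (X ω, Y ω)) P =
      Measure.map (fun uv : ℝ × ℝ => (uv.1, uv.1 / 2 + (Real.sqrt 3 / 2) * uv.2))
        ((gaussianReal 0 1).prod (gaussianReal 0 1))) :
    qcor P Y X τ =
      0.5 * Real.exp (-0.5 * stdNormalQuantile τ ^ 2) /
        Real.sqrt ((τ - τ ^ 2) * (2 * Real.pi)) := by
  set μ := gaussianReal 0 1 with hμ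
  set pair : Ω → ℝ × ℝ := fun ω => (X ω, Y ω) with hpair_def
  set f : ℝ × ℝ → ℝ × ℝ := fun uv => (uv.1, uv.1 / 2 + (Real.sqrt 3 / 2) * uv.2) with hf_def
  have hpair : Measurable pair := hX.prodMk hY
  have hfm : Measurable f :=
    measurable_fst.prodMk ((measurable_fst.div_const 2).add (measurable_snd.const_mul _))
  have hg : Measurable fun uv : ℝ × ℝ => uv.1 / 2 + (Real.sqrt 3 / 2) * uv.2 :=
    (measurable_fst.div_const 2).add (measurable_snd.const_mul _)
  -- (b) CDF of Y
  have hcdf : ∀ y : ℝ, (P {ω | Y ω ≤ y}).toReal = stdNormalCDF y := by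
    intro y
    have hset : {ω | Y ω ≤ y} = pair ⁻¹' (Prod.snd ⁻¹' Iic y) := rfl
    have hsnd : MeasurableSet (Prod.snd ⁻¹' Iic y : Set (ℝ × ℝ)) :=
      measurable_snd measurableSet_Iic
    rw [hset, ← Measure.map_apply hpair hsnd, hlaw, Measure.map_apply hfm hsnd]
    have hpre : f ⁻¹' (Prod.snd ⁻¹' Iic y)
        = (fun uv : ℝ × ℝ => uv.1 / 2 + (Real.sqrt 3 / 2) * uv.2) ⁻¹' Iic y := rfl
    rw [hpre]
    have hB : MeasurableSet ((fun uv : ℝ × ℝ => uv.1 / 2 + (Real.sqrt 3 / 2) * uv.2) ⁻¹' Iic y) :=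
      hg measurableSet_Iic
    rw [← measureReal_def, ← integral_indicator_one hB]
    have hint : Integrable (((fun uv : ℝ × ℝ => uv.1 / 2 + (Real.sqrt 3 / 2) * uv.2) ⁻¹' Iic y).indicator
        (1 : ℝ × ℝ → ℝ)) (μ.prod μ) := (integrable_const 1).indicator hB
    rw [integral_prod _ hint, ← K1 y]
    refine integral_congr_ae (ae_of_all _ fun u => integral_congr_ae (ae_of_all _ fun v => ?_))
    by_cases h : u / 2 + Real.sqrt 3 / 2 * v ≤ y <;>
      simp [Set.indicator_apply, Set.mem_preimage, Set.mem_Iic, h]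
  -- (c) quantile
  have hq : quant P Y τ = stdNormalQuantile τ := by
    unfold quant stdNormalQuantile
    congr 1
    ext y
    simp only [Set.mem_setOf_eq, hcdf y]
  -- (d) law of X
  have hmapX : Measure.map X P = μ := by
    have h1 : Measure.map X P = Measure.map Prod.fst (Measure.map pair P) := by
      rw [Measure.map_map measurable_fst hpair]; rfl
    rw [h1, hlaw, Measure.map_map measurable_fst hfm]
    have h2 : (Prod.fst ∘ f) = (Prod.fst : ℝ × ℝ → ℝ) := rfl
    rw [h2, Measure.map_fst_prod, measure_univ, one_smul]
  -- (e) X integrable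
  have hXint : Integrable X P := by
    have h := integrable_map_measure (f := X) (g := fun x : ℝ => x)
      (by rw [hmapX]; exact measurable_id.aestronglyMeasurable) hX.aemeasurable
    rw [hmapX] at h
    exact h.mp integrable_id_gauss
  -- (f) mean zero
  have hEX : (∫ ω, X ω ∂P) = 0 := by
    have h1 := integral_map (φ := X) (f := fun x : ℝ => x) hX.aemeasurable
      (by rw [hmapX]; exact measurable_id.aestronglyMeasurable)
    rw [hmapX] at h1
    rw [← h1, integral_id_gauss]
  -- (h) variance
  have hvar : variance X P = 1 := by
    have hmem : MemLp X 2 P := by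
      rw [memLp_two_iff_integrable_sq hX.aestronglyMeasurable]
      have h := integrable_map_measure (f := X) (g := fun x : ℝ => x^2)
        (by rw [hmapX]; exact (measurable_id.pow_const 2).aestronglyMeasurable) hX.aemeasurable
      rw [hmapX] at h
      exact h.mp integrable_sq_gauss
    rw [variance_eq_sub hmem]
    have h2 := integral_map (φ := X) (f := fun x : ℝ => x^2) hX.aemeasurable
      (by rw [hmapX]; exact (measurable_id.pow_const 2).aestronglyMeasurable)
    rw [hmapX] at h2
    have h3 : (∫ ω, (X ^ 2) ω ∂P) = ∫ x, x^2 ∂μ := by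
      rw [h2]; rfl
    rw [h3, integral_sq_gauss, hEX]
    norm_num
  -- (i) qcov
  set q : ℝ := stdNormalQuantile τ with hqdef
  have hDm : Measurable fun p : ℝ × ℝ => (if p.2 < q then (1:ℝ) else 0) * p.1 := by
    refine Measurable.mul ?_ measurable_fst
    exact Measurable.ite (measurable_snd measurableSet_Iio) measurable_const measurable_const
  have hqcov : qcov P Y X τ = E' q / (2 * Real.sqrt (2*Real.pi)) := by
    unfold qcov psi
    rw [hq, hEX]
    have hpt : ∀ ω, (τ - if Y ω - q < 0 then (1:ℝ) else 0) * (X ω - 0)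
        = τ * X ω - (if Y ω < q then (1:ℝ) else 0) * X ω := by
      intro ω
      rw [sub_zero, sub_mul]
      congr 2
      simp only [sub_neg]
    rw [integral_congr_ae (ae_of_all _ hpt)]
    have hiD : Integrable (fun ω => (if Y ω < q then (1:ℝ) else 0) * X ω) P := by
      apply Integrable.mono' hXint.norm
      · exact ((Measurable.ite (hY measurableSet_Iio) measurable_const measurable_const).mul
          hX).aestronglyMeasurable
      · refine ae_of_all _ fun ω => ?_
        rw [norm_mul]
        by_cases h : Y ω < q <;> simp [h]
    rw [integral_sub (hXint.const_mul τ) hiD, integral_const_mul, hEX, mul_zero, zero_sub]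
    have hD : (∫ ω, (if Y ω < q then (1:ℝ) else 0) * X ω ∂P)
        = - (E' q / (2 * Real.sqrt (2*Real.pi))) := by
      have h1 : (∫ ω, (if Y ω < q then (1:ℝ) else 0) * X ω ∂P)
          = ∫ p, (if p.2 < q then (1:ℝ) else 0) * p.1 ∂(Measure.map pair P) := by
        rw [integral_map hpair.aemeasurable hDm.aestronglyMeasurable]
      rw [h1, hlaw, integral_map hfm.aemeasurable hDm.aestronglyMeasurable]
      have h2 : Integrable (fun uv : ℝ × ℝ =>
          (if uv.1/2 + (Real.sqrt 3/2)*uv.2 < q then (1:ℝ) else 0) * uv.1) (μ.prod μ) := by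
        have hfst : Integrable (fun uv : ℝ × ℝ => uv.1) (μ.prod μ) := by
          have h := integrable_map_measure (μ := μ.prod μ) (f := (Prod.fst : ℝ × ℝ → ℝ)) (g := fun x : ℝ => x)
            (by rw [Measure.map_fst_prod, measure_univ, one_smul]
                exact measurable_id.aestronglyMeasurable) measurable_fst.aemeasurable
          rw [Measure.map_fst_prod, measure_univ, one_smul] at h
          exact h.mp integrable_id_gauss
        apply Integrable.mono' hfst.norm
        · exact ((Measurable.ite (hg measurableSet_Iio) measurable_const
            measurable_const).mul measurable_fst).aestronglyMeasurable
        · refine ae_of_all _ fun uv => ?_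
          rw [norm_mul]
          by_cases h : uv.1/2 + (Real.sqrt 3/2)*uv.2 < q <;> simp [h]
      have h3 := integral_prod_symm _ h2
      rw [show (fun uv : ℝ × ℝ => (if (f uv).2 < q then (1:ℝ) else 0) * (f uv).1)
          = fun uv : ℝ × ℝ => (if uv.1/2 + (Real.sqrt 3/2)*uv.2 < q then (1:ℝ) else 0) * uv.1
          from rfl, h3]
      exact K2 q
    rw [hD, neg_neg]
  -- final algebra
  unfold qcor
  rw [hqcov, hvar, mul_one]
  have htpos : 0 < τ - τ^2 := by nlinarith [hτ.1, hτ.2]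
  have hEq : E' q = Real.exp (-0.5 * q^2) := by
    unfold E'; congr 1; ring
  rw [hEq, Real.sqrt_mul htpos.le (2*Real.pi)]
  have h1 : 0 < Real.sqrt (τ - τ^2) := Real.sqrt_pos.mpr htpos
  have h2 := sqrt2pi_pos
  field_simp
  ring

end Main
end
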